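/- Let S be a normal subgroup of a finite group G and let R be an r-subgroup of G for a prime r. If r does not divide |S| but another prime p divides |S|, then R normalizes some Sylow p-subgroup of S. -/

import Mathlib

open Pointwise

theorem stmt7 {G : Type*} [Group G] [Finite G] (S : Subgroup G) [S.Normal]
    (r p : ℕ) (hr : r.Prime) (hp : p.Prime) (R : Subgroup G) (hR : IsPGroup r R)
    (hrS : ¬ r ∣ Nat.card S) (hpS : p ∣ Nat.card S) :
    ∃ P : Subgroup G, P ≤ S ∧
      Nat.card P = p ^ ((Nat.card S).factorization p) ∧
      R ≤ Subgroup.normalizer (P : Set G) := by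
  have : Fact p.Prime := ⟨hp⟩
  have : Fact r.Prime := ⟨hr⟩
  -- action of R on Sylow p ↥S via conjugation (S is normal)
  letI : MulDistribMulAction R ↥S :=
    MulDistribMulAction.compHom ↥S ((MulAut.conjNormal (H := S)).comp R.subtype)
  have hdvd : Nat.card (Sylow p ↥S) ∣ Nat.card ↥S := by
    obtain ⟨Q⟩ : Nonempty (Sylow p ↥S) := inferInstance
    exact (Sylow.card_dvd_index Q).trans (Q : Subgroup ↥S).index_dvd_card
  have hr' : ¬ r ∣ Nat.card (Sylow p ↥S) := fun h => hrS (h.trans hdvd)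
  obtain ⟨Q, hQ⟩ := hR.nonempty_fixed_point_of_prime_not_dvd_card (Sylow p ↥S) hr'
  refine ⟨(Q : Subgroup ↥S).map S.subtype, Subgroup.map_subtype_le _, ?_, ?_⟩
  · rw [Nat.card_congr
      (Subgroup.equivMapOfInjective (Q : Subgroup ↥S) _ S.subtype_injective).symm.toEquiv]
    exact Q.card_eq_multiplicity
  · intro g hg
    have hfix : (⟨g, hg⟩ : R) • (Q : Subgroup ↥S) = Q := by
      have := hQ ⟨g, hg⟩
      rw [Sylow.ext_iff, Sylow.pointwise_smul_def] at this
      exact this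
    rw [Subgroup.mem_normalizer_iff]
    intro x
    constructor
    · rintro ⟨s, hs, rfl⟩
      refine ⟨(⟨g, hg⟩ : R) • s, ?_, ?_⟩
      · rw [← hfix]; exact Subgroup.smul_mem_pointwise_smul s _ _ hs
      · show ((MulAut.conjNormal g) s : G) = _
        rw [MulAut.conjNormal_apply]; rfl
    · rintro ⟨s, hs, hx⟩
      refine ⟨(⟨g, hg⟩ : R)⁻¹ • s, ?_, ?_⟩
      · rw [← hfix] at hs
        exact Subgroup.mem_pointwise_smul_iff_inv_smul_mem.mp hs
      · show ((MulAut.conjNormal g)⁻¹ s : G) = x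
        rw [MulAut.conjNormal_inv_apply]
        have : (s : G) = g * x * g⁻¹ := hx ▸ rfl
        rw [this]; group
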